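/- In the knapsack setting with items indexed in nonincreasing density order, for any k ≤ n, if the prefix {0,…,k−1} has total size T = ∑_{i<k} w i with T ≤ W, then its total value satisfies ∑_{i<k} v i ≥ (T/W)·OPT. (A greedy prefix captures value at least proportional to the fraction of capacity it fills.) -/

import Mathlib

/-- **A greedy prefix captures value proportional to the capacity it fills.**
In the knapsack setting with items indexed in nonincreasing density order, if the
prefix `{0,…,k−1}` has total size `T ≤ W`, then its total value is at least
`(T/W)·OPT`: at least `(T/W)` times the value of every feasible subset `S`. -/
theorem greedy_prefix_proportional_value
    (n : ℕ) (hn : 1 ≤ n) (v w : Fin n → ℝ) (W : ℝ) (hW : 0 < W)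
    (hv : ∀ i, 0 ≤ v i) (hw0 : ∀ i, 0 < w i) (hwW : ∀ i, w i ≤ W)
    (hdens : ∀ i j : Fin n, i ≤ j → v j / w j ≤ v i / w i)
    (k : ℕ) (hkn : k ≤ n) (T : ℝ)
    (hT : T = ∑ i ∈ Finset.univ.filter (fun i : Fin n => (i : ℕ) < k), w i)
    (hTW : T ≤ W)
    (S : Finset (Fin n)) (hS : ∑ i ∈ S, w i ≤ W) :
    (T / W) * ∑ i ∈ S, v i ≤
      ∑ i ∈ Finset.univ.filter (fun i : Fin n => (i : ℕ) < k), v i := by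
  set P : Finset (Fin n) := Finset.univ.filter (fun i : Fin n => (i : ℕ) < k) with hP
  rcases Nat.eq_zero_or_pos k with hk0 | hk1
  · subst hk0
    have : P = ∅ := by
      simp [hP, Finset.filter_eq_empty_iff]
    rw [this] at hT ⊢
    simp at hT
    simp [hT]
  · set j : Fin n := ⟨k - 1, by omega⟩ with hj
    set ρ : ℝ := v j / w j with hρ
    have hρ0 : 0 ≤ ρ := div_nonneg (hv j) (hw0 j).le
    have hmemP : ∀ i : Fin n, i ∈ P ↔ (i : ℕ) < k := by
      intro i; simp [hP]
    -- items in P have density ≥ ρ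
    have hPlow : ∀ i ∈ P, ρ * w i ≤ v i := by
      intro i hi
      have hik : (i : ℕ) < k := (hmemP i).mp hi
      have hij : i ≤ j := by
        simp [hj, Fin.le_def]; omega
      have := hdens i j hij
      exact (le_div_iff₀ (hw0 i)).mp this
    have hnP : ∀ i : Fin n, i ∉ P → v i ≤ ρ * w i := by
      intro i hi
      have hik : ¬ (i : ℕ) < k := fun h => hi ((hmemP i).mpr h)
      have hji : j ≤ i := by simp [hj, Fin.le_def]; omega
      have := hdens j i hji
      exact (div_le_iff₀ (hw0 i)).mp this
    set a : ℝ := ∑ i ∈ S ∩ P, v i with ha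
    set b : ℝ := ∑ i ∈ S ∩ P, w i with hb
    set c : ℝ := ∑ i ∈ S \ P, v i with hc
    set d : ℝ := ∑ i ∈ S \ P, w i with hd
    have hvS : ∑ i ∈ S, v i = a + c := (Finset.sum_inter_add_sum_sdiff S P v).symm
    have hwS : ∑ i ∈ S, w i = b + d := (Finset.sum_inter_add_sum_sdiff S P w).symm
    have hab : ρ * b ≤ a := by
      rw [ha, hb, Finset.mul_sum]
      exact Finset.sum_le_sum fun i hi => hPlow i (Finset.mem_inter.mp hi).2
    have hcd : c ≤ ρ * d := by
      rw [hc, hd, Finset.mul_sum]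
      exact Finset.sum_le_sum fun i hi => hnP i (Finset.mem_sdiff.mp hi).2
    have ha0 : 0 ≤ a := Finset.sum_nonneg fun i _ => hv i
    have hd0 : 0 ≤ d := Finset.sum_nonneg fun i _ => (hw0 i).le
    have hT0 : 0 ≤ T := by
      rw [hT]; exact Finset.sum_nonneg fun i _ => (hw0 i).le
    -- value of P ≥ a + ρ (T − b)
    have hwP : T = b + ∑ i ∈ P \ S, w i := by
      rw [hT, hb, Finset.inter_comm, ← Finset.sum_inter_add_sum_sdiff P S w]
    have hvP : a + ρ * (T - b) ≤ ∑ i ∈ P, v i := by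
      rw [← Finset.sum_inter_add_sum_sdiff P S v, Finset.inter_comm, ← ha]
      have h1 : ρ * (T - b) ≤ ∑ i ∈ P \ S, v i := by
        have : T - b = ∑ i ∈ P \ S, w i := by linarith [hwP]
        rw [this, Finset.mul_sum]
        exact Finset.sum_le_sum fun i hi => hPlow i (Finset.mem_sdiff.mp hi).1
      linarith
    have hbdW : b + d ≤ W := by rw [← hwS]; exact hS
    rw [hvS, div_mul_eq_mul_div, div_le_iff₀ hW]
    nlinarith [mul_nonneg hT0 (sub_nonneg.mpr hcd), mul_nonneg hρ0 (mul_nonneg hT0 (by linarith : (0:ℝ) ≤ W - b - d)), mul_nonneg (sub_nonneg.mpr hTW) (sub_nonneg.mpr hab)]
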